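/- Let B, r, k, ℓ, N, s be positive integers with r ≤ B, 1 ≤ k, ℓ ≤ r−1, gcd(k, ℓ) = 1, s = 4B², and N ≥ √2·s. Let x, y be integers with |x/N − k/r| ≤ 1/N and |y/N − ℓ/r| ≤ 1/N. Let m, n be integers with (m, n) ≠ c·(−ℓ, k) for every integer c and with m² + n² ≤ 4B². Then the vector z = m·(1, 0, s·x/N) + n·(0, 1, s·y/N) ∈ ℚ³ satisfies ‖z‖₂ > 2B. -/

import Mathlib

set_option maxHeartbeats 1000000

theorem stmt_4 (B r k l N s : ℤ) (hB : 1 ≤ B) (hrB : r ≤ B)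
    (hk : 1 ≤ k) (hk' : k ≤ r - 1) (hl : 1 ≤ l) (hl' : l ≤ r - 1)
    (hgcd : Int.gcd k l = 1)
    (hs : s = 4 * B ^ 2) (hN : (N : ℝ) ≥ Real.sqrt 2 * s) (hN1 : 1 ≤ N)
    (x y : ℤ)
    (hx : |(x : ℚ) / N - (k : ℚ) / r| ≤ 1 / N)
    (hy : |(y : ℚ) / N - (l : ℚ) / r| ≤ 1 / N)
    (m n : ℤ) (hmn : ∀ c : ℤ, ¬(m = c * (-l) ∧ n = c * k))
    (hbound : m ^ 2 + n ^ 2 ≤ 4 * B ^ 2) :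
    Real.sqrt (((m : ℚ) : ℝ) ^ 2 + ((n : ℚ) : ℝ) ^ 2 +
      (((m : ℚ) * s * x / N + (n : ℚ) * s * y / N : ℚ) : ℝ) ^ 2) > 2 * B := by
  -- integer part: m*k + n*l ≠ 0
  have hd : (m * k + n * l : ℤ) ≠ 0 := by
    intro h
    have hco : IsCoprime (l : ℤ) k := by
      rw [Int.isCoprime_iff_gcd_eq_one, Int.gcd_comm]; exact hgcd
    have hdvd : l ∣ m * k := ⟨-n, by linarith⟩
    obtain ⟨c, hc⟩ := hco.dvd_of_dvd_mul_right hdvd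
    have hl0 : (l : ℤ) ≠ 0 := by omega
    have h2 : l * (c * k + n) = 0 := by rw [hc] at h; linear_combination h
    rcases mul_eq_zero.mp h2 with h' | h'
    · omega
    · exact hmn (-c) ⟨by rw [hc]; ring, by linarith⟩
  have hBR : (1:ℝ) ≤ B := by exact_mod_cast hB
  have hNR : (1:ℝ) ≤ (N:ℝ) := by exact_mod_cast hN1
  have hN0 : (0:ℝ) < N := by linarith
  have hr2 : (2:ℤ) ≤ r := by omega
  have hrR : (0:ℝ) < r := by exact_mod_cast (by omega : (0:ℤ) < r)
  have hsR : (s:ℝ) = 4 * B ^ 2 := by exact_mod_cast hs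
  have hs0 : (0:ℝ) < s := by rw [hsR]; positivity
  have hN0' : (N:ℝ) ≠ 0 := ne_of_gt hN0
  have hr0' : (r:ℝ) ≠ 0 := ne_of_gt hrR
  have hxR : |(x:ℝ)/N - (k:ℝ)/r| ≤ 1/N := by exact_mod_cast hx
  have hyR : |(y:ℝ)/N - (l:ℝ)/r| ≤ 1/N := by exact_mod_cast hy
  push_cast
  set z : ℝ := (m:ℝ) * s * x / N + n * s * y / N with hzdef
  have h2B : (0:ℝ) ≤ 2 * B := by linarith
  rw [gt_iff_lt, Real.lt_sqrt (by linarith)]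
  -- suffices (2B)^2 < sum
  set t : ℝ := Real.sqrt ((m:ℝ)^2 + (n:ℝ)^2) with htdef
  have ht0 : 0 ≤ t := Real.sqrt_nonneg _
  have ht2 : t ^ 2 = (m:ℝ)^2 + (n:ℝ)^2 := Real.sq_sqrt (by positivity)
  have hboundR : (m:ℝ)^2 + (n:ℝ)^2 ≤ 4 * B^2 := by exact_mod_cast hbound
  have htB : t ≤ 2 * B := by nlinarith [ht2]
  -- decompose z
  have hz : z = s * ((m:ℝ)*((x:ℝ)/N - k/r) + n*((y:ℝ)/N - l/r)) + s*(m*k+n*l)/r := by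
    rw [hzdef]; push_cast; field_simp; ring
  -- error bound
  have hE : |(m:ℝ)*((x:ℝ)/N - k/r) + n*((y:ℝ)/N - l/r)| ≤ (|(m:ℝ)| + |(n:ℝ)|)/N := by
    calc |(m:ℝ)*((x:ℝ)/N - k/r) + n*((y:ℝ)/N - l/r)|
        ≤ |(m:ℝ)| *|(x:ℝ)/N - k/r| + |(n:ℝ)| *|(y:ℝ)/N - l/r| := by
          refine (abs_add_le _ _).trans ?_
          rw [abs_mul, abs_mul]
      _ ≤ |(m:ℝ)| *(1/N) + |(n:ℝ)| *(1/N) := by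
          gcongr <;> first | positivity | exact hxR | exact hyR
      _ = (|(m:ℝ)| + |(n:ℝ)|)/N := by ring
  have hsqrt2 : (0:ℝ) < Real.sqrt 2 := by positivity
  have habmn : (|(m:ℝ)| + |(n:ℝ)|) / Real.sqrt 2 ≤ t := by
    rw [htdef, ← Real.sqrt_sq (by positivity : (0:ℝ) ≤ (|(m:ℝ)| + |(n:ℝ)|) / Real.sqrt 2)]
    apply Real.sqrt_le_sqrt
    have h2 : (Real.sqrt 2)^2 = 2 := Real.sq_sqrt (by norm_num)
    rw [div_pow, h2, div_le_iff₀ (by norm_num : (0:ℝ) < 2)]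
    nlinarith [sq_nonneg (|(m:ℝ)| - |(n:ℝ)|), sq_abs (m:ℝ), sq_abs (n:ℝ)]
  have hErr : |s * ((m:ℝ)*((x:ℝ)/N - k/r) + n*((y:ℝ)/N - l/r))| ≤ t := by
    rw [abs_mul, abs_of_pos hs0]
    calc (s:ℝ) * |(m:ℝ)*((x:ℝ)/N - k/r) + n*((y:ℝ)/N - l/r)|
        ≤ s * ((|(m:ℝ)| + |(n:ℝ)|)/N) := by
          exact mul_le_mul_of_nonneg_left hE (le_of_lt hs0)
      _ = s * (|(m:ℝ)| + |(n:ℝ)|)/N := by ring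
      _ ≤ s * (|(m:ℝ)| + |(n:ℝ)|)/(Real.sqrt 2 * s) := by
          have hle : Real.sqrt 2 * (s:ℝ) ≤ (N:ℝ) := hN
          exact div_le_div_of_nonneg_left (by positivity) (by positivity) hle
      _ = (|(m:ℝ)| + |(n:ℝ)|)/Real.sqrt 2 := by
          field_simp
      _ ≤ t := habmn
  -- main term
  have hdR : (1:ℝ) ≤ |((m*k+n*l : ℤ):ℝ)| := by
    exact_mod_cast Int.one_le_abs (by omega)
  have hMain : 4 * (B:ℝ) ≤ |(s:ℝ)*(m*k+n*l)/r| := by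
    rw [abs_div, abs_mul, abs_of_pos hs0, abs_of_pos hrR]
    have h1 : (s:ℝ) * 1 ≤ s * |((m*k+n*l : ℤ):ℝ)| := by
      apply mul_le_mul_of_nonneg_left _ (le_of_lt hs0)
      exact hdR
    have hrB' : (r:ℝ) ≤ B := by exact_mod_cast hrB
    have : (s:ℝ)/r ≥ s/B := by
      apply div_le_div_of_nonneg_left (le_of_lt hs0) hrR hrB'
    have hsB : (s:ℝ)/B = 4*B := by rw [hsR]; field_simp
    have step : 4*(B:ℝ) ≤ s/r := by rw [← hsB]; exact this
    calc 4*(B:ℝ) ≤ (s:ℝ)/r := step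
      _ ≤ s * |((m*k+n*l : ℤ):ℝ)| / r := by
          apply div_le_div_of_nonneg_right ?_ hrR.le  -- maybe wrong name
          linarith [h1]
      _ = s * |((m:ℝ)*k+n*l)| / r := by push_cast; ring_nf
  have hzabs : 4 * (B:ℝ) - t ≤ |z| := by
    have := abs_sub_abs_le_abs_sub z (s * ((m:ℝ)*((x:ℝ)/N - k/r) + n*((y:ℝ)/N - l/r)))
    have heq : z - s * ((m:ℝ)*((x:ℝ)/N - k/r) + n*((y:ℝ)/N - l/r)) = (s:ℝ)*((m:ℝ)*k+n*l)/r := by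
      rw [hz]; push_cast; ring
    rw [heq] at this
    have h3 := abs_sub z (s * ((m:ℝ)*((x:ℝ)/N - k/r) + n*((y:ℝ)/N - l/r)))
    rw [heq] at h3
    have hM' : 4 * (B:ℝ) ≤ |(s:ℝ)*((m:ℝ)*k+n*l)/r| := by
      have := hMain; push_cast at this ⊢; convert this using 3 <;> ring
    linarith [hErr, hM', h3]
  have hzsq : (4*(B:ℝ) - t)^2 ≤ z^2 := by
    have h1 : 0 ≤ 4*(B:ℝ) - t := by linarith
    nlinarith [sq_abs z, abs_nonneg z]
  nlinarith [ht2, sq_nonneg (t - 2*B)]
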